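/- Let a, b, δ be real numbers with 0 ≤ b ≤ a ≤ 1/4 and 0 ≤ δ ≤ 1/2, and suppose a + b > 0 or δ > 0. Define q₁ := (a(1−δ) + (1−a)δ)·(bδ + (1−b)(1−δ)) and q₋₁ := (aδ + (1−a)(1−δ))·(b(1−δ) + (1−b)δ). Then q₁ + q₋₁ > 0 and: (i) if δ > 0 and δ ≥ ((a+b)/2)·(1−2δ), then q₁/(q₁ + q₋₁) ≥ 1/2 + (a − b)·(1−2δ)/(8δ); (ii) if a + b > 0 and δ < ((a+b)/2)·(1−2δ), then q₁/(q₁ + q₋₁) ≥ 1/2 + (a − b)/(4(a + b)). -/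

import Mathlib

theorem paired_message_conditional_bias
    (a b δ : ℝ) (hb0 : 0 ≤ b) (hba : b ≤ a) (ha1 : a ≤ 1 / 4)
    (hδ0 : 0 ≤ δ) (hδ1 : δ ≤ 1 / 2)
    (hpos : 0 < a + b ∨ 0 < δ)
    (q1 qm1 : ℝ)
    (hq1 : q1 = (a * (1 - δ) + (1 - a) * δ) * (b * δ + (1 - b) * (1 - δ)))
    (hqm1 : qm1 = (a * δ + (1 - a) * (1 - δ)) * (b * (1 - δ) + (1 - b) * δ)) :
    0 < q1 + qm1 ∧
    (0 < δ → δ ≥ ((a + b) / 2) * (1 - 2 * δ) →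
      q1 / (q1 + qm1) ≥ 1 / 2 + (a - b) * (1 - 2 * δ) / (8 * δ)) ∧
    (0 < a + b → δ < ((a + b) / 2) * (1 - 2 * δ) →
      q1 / (q1 + qm1) ≥ 1 / 2 + (a - b) / (4 * (a + b))) := by
  have ha0 : 0 ≤ a := le_trans hb0 hba
  have hS : q1 + qm1 = (a + b - 2*a*b) * (1 - 2*δ)^2 + 2*δ*(1-δ) := by
    subst hq1 hqm1; ring
  have hD : q1 - qm1 = (a - b) * (1 - 2*δ) := by
    subst hq1 hqm1; ring
  have hab : 0 ≤ a * b := mul_nonneg ha0 hb0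
  have hab2 : (a + b) / 2 ≤ a + b - 2*a*b := by nlinarith
  have hSpos : 0 < q1 + qm1 := by
    rw [hS]
    rcases hpos with h | h
    · nlinarith [sq_nonneg (1 - 2*δ), mul_nonneg hδ0 (by linarith : (0:ℝ) ≤ 1 - δ)]
    · nlinarith [sq_nonneg (1 - 2*δ)]
  have hne : q1 + qm1 ≠ 0 := ne_of_gt hSpos
  have hkey : q1 / (q1 + qm1) = 1/2 + (a - b) * (1 - 2*δ) / (2 * (q1 + qm1)) := by
    field_simp
    linear_combination hD
  refine ⟨hSpos, ?_, ?_⟩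
  · intro hd h2
    rw [hkey, ge_iff_le, add_le_add_iff_left,
      div_le_div_iff₀ (by linarith) (by linarith)]
    have hN : 0 ≤ (a - b) * (1 - 2*δ) :=
      mul_nonneg (by linarith) (by linarith)
    have hS4 : q1 + qm1 ≤ 4 * δ := by
      rw [hS]
      nlinarith [mul_nonneg hab (sq_nonneg (1 - 2*δ)),
        mul_le_mul_of_nonneg_right h2 (by linarith : (0:ℝ) ≤ 1 - 2*δ)]
    nlinarith [mul_le_mul_of_nonneg_left hS4 hN]
  · intro hs h2
    have h12 : 0 < 1 - 2*δ := by nlinarith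
    rw [hkey, ge_iff_le, add_le_add_iff_left,
      div_le_div_iff₀ (by linarith) (by linarith)]
    have hS2 : q1 + qm1 ≤ 2 * (a + b) * (1 - 2*δ) := by
      rw [hS]
      nlinarith [mul_nonneg hab (sq_nonneg (1 - 2*δ)),
        mul_nonneg (by linarith : (0:ℝ) ≤ a + b) (mul_nonneg hδ0 (by linarith : (0:ℝ) ≤ 1 - 2*δ))]
    nlinarith [mul_le_mul_of_nonneg_left hS2 (by linarith : (0:ℝ) ≤ a - b)]
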